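/- (Interpretation of the J_vN loss as matching second-order statistics.) Let P be a probability measure on ℝ^d with finite second moments and let f, f̂ : ℝ^d → ℝ be measurable with finite second moments under P. If the joint covariance matrices σ^P_{x,f(x)} and σ^P_{x,f̂(x)} are positive definite, then J_vN(σ^P_{x,f(x)} : σ^P_{x,f̂(x)}) = 0 if and only if Var(f(x)) = Var(f̂(x)) and Cov(x_i, f(x)) = Cov(x_i, f̂(x)) for every coordinate i ∈ {1,…,d}. -/

import Mathlib

open Matrix MeasureTheory

/-- Matrix logarithm of a real symmetric matrix, via the spectral decomposition:
apply the real logarithm to the eigenvalues. (Junk value `0` if not symmetric.) -/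
noncomputable def matLog {n : Type*} [Fintype n] [DecidableEq n]
    (A : Matrix n n ℝ) : Matrix n n ℝ :=
  if h : A.IsHermitian then h.cfc Real.log else 0

/-- The von Neumann divergence `D_vN(X‖Y) = Tr(X log X − X log Y − X + Y)`. -/
noncomputable def DvN {n : Type*} [Fintype n] [DecidableEq n]
    (X Y : Matrix n n ℝ) : ℝ :=
  (X * matLog X - X * matLog Y - X + Y).trace

/-- The symmetric (Jeffery) von Neumann divergence
`J_vN(X:Y) = (1/2)(D_vN(X‖Y) + D_vN(Y‖X))`. -/
noncomputable def JvN {n : Type*} [Fintype n] [DecidableEq n]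
    (X Y : Matrix n n ℝ) : ℝ :=
  (1 / 2) * (DvN X Y + DvN Y X)

/-- The covariance matrix of a measure on `ℝ^m`: the matrix of pairwise covariances
of the coordinates. -/
noncomputable def covMatrix {m : ℕ} (Q : Measure (Fin m → ℝ)) :
    Matrix (Fin m) (Fin m) ℝ :=
  Matrix.of fun i j => ∫ x, (x i - ∫ y, y i ∂Q) * (x j - ∫ y, y j ∂Q) ∂Q

/-- `σ^P_{x,g(x)}` : the `(d+1) × (d+1)` covariance matrix of the random vector
`(x, g(x))` with `x ~ P`. -/
noncomputable def jointCov {d : ℕ} (P : Measure (Fin d → ℝ))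
    (g : (Fin d → ℝ) → ℝ) : Matrix (Fin (d + 1)) (Fin (d + 1)) ℝ :=
  covMatrix (P.map (fun x => Fin.snoc x (g x)))

/-- `d_P(g, g₂) = √(J_vN(σ^P_{x,g(x)} : σ^P_{x,g₂(x)}))`. -/
noncomputable def dvn {d : ℕ} (P : Measure (Fin d → ℝ))
    (g g₂ : (Fin d → ℝ) → ℝ) : ℝ :=
  Real.sqrt (JvN (jointCov P g) (jointCov P g₂))

section Aux

variable {n : Type*} [Fintype n] [DecidableEq n]

lemma matLog_of_posDef {X : Matrix n n ℝ} (hX : X.PosDef) :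
    matLog X = (hX.1.eigenvectorUnitary : Matrix n n ℝ) *
      diagonal (Real.log ∘ hX.1.eigenvalues) * star (hX.1.eigenvectorUnitary : Matrix n n ℝ) := by
  rw [matLog, dif_pos hX.1, Matrix.IsHermitian.cfc]
  simp [RCLike.ofReal_real_eq_id, Function.comp_def]

lemma spectral_real {X : Matrix n n ℝ} (hX : X.IsHermitian) :
    X = (hX.eigenvectorUnitary : Matrix n n ℝ) * diagonal hX.eigenvalues *
      star (hX.eigenvectorUnitary : Matrix n n ℝ) := by
  conv_lhs => rw [hX.spectral_theorem]
  simp [RCLike.ofReal_real_eq_id]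

lemma trace_DWDW (W : Matrix n n ℝ) (a b : n → ℝ) :
    (diagonal a * W * diagonal b * star W).trace = ∑ i, ∑ j, a i * b j * (W i j) ^ 2 := by
  simp only [trace, diag_apply, Matrix.mul_apply, Matrix.star_apply, star_trivial,
    Matrix.diagonal_apply, ite_mul, mul_ite, zero_mul, mul_zero, Finset.sum_ite_eq,
    Finset.sum_ite_eq', Finset.mem_univ, if_true]
  refine Finset.sum_congr rfl fun i _ => Finset.sum_congr rfl fun j _ => by ring

lemma trace_UDU (U V : Matrix n n ℝ) (a b : n → ℝ) :
    (U * diagonal a * star U * (V * diagonal b * star V)).trace =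
      (diagonal a * (star U * V) * diagonal b * star (star U * V)).trace := by
  have hstar : star (star U * V) = star V * U := by
    rw [StarMul.star_mul, star_star]
  rw [hstar]
  simp only [mul_assoc]
  rw [trace_mul_comm U]
  simp only [mul_assoc]

lemma log_prod_nonneg {a b : ℝ} (ha : 0 < a) (hb : 0 < b) :
    0 ≤ (a - b) * (Real.log a - Real.log b) := by
  rcases le_total a b with h | h
  · nlinarith [mul_nonneg (sub_nonneg.2 h) (sub_nonneg.2 (Real.log_le_log ha h))]
  · nlinarith [mul_nonneg (sub_nonneg.2 h) (sub_nonneg.2 (Real.log_le_log hb h))]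

lemma eq_of_log_prod_eq_zero {a b : ℝ} (ha : 0 < a) (hb : 0 < b)
    (h : (a - b) * (Real.log a - Real.log b) = 0) : a = b := by
  rcases lt_trichotomy a b with hlt | heq | hgt
  · exfalso
    have := mul_pos_of_neg_of_neg (sub_neg.2 hlt) (sub_neg.2 (Real.log_lt_log ha hlt))
    linarith
  · exact heq
  · exfalso
    have := mul_pos (sub_pos.2 hgt) (sub_pos.2 (Real.log_lt_log hb hgt))
    linarith

lemma JvN_eq_zero_iff_of_posDef {X Y : Matrix n n ℝ} (hX : X.PosDef) (hY : Y.PosDef) :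
    JvN X Y = 0 ↔ X = Y := by
  constructor
  · intro h
    set U : Matrix n n ℝ := (hX.1.eigenvectorUnitary : Matrix n n ℝ) with hU
    set V : Matrix n n ℝ := (hY.1.eigenvectorUnitary : Matrix n n ℝ) with hV
    set lam := hX.1.eigenvalues with hlam
    set mu := hY.1.eigenvalues with hmu
    have hUu : U ∈ unitaryGroup n ℝ := SetLike.coe_mem _
    have hVu : V ∈ unitaryGroup n ℝ := SetLike.coe_mem _
    have hUU : U * star U = 1 := mem_unitaryGroup_iff.mp hUu
    have hUU' : star U * U = 1 := mem_unitaryGroup_iff'.mp hUu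
    have hVV : V * star V = 1 := mem_unitaryGroup_iff.mp hVu
    have hVV' : star V * V = 1 := mem_unitaryGroup_iff'.mp hVu
    set W : Matrix n n ℝ := star U * V with hW
    have hWstar : star W = star V * U := by rw [hW, StarMul.star_mul, star_star]
    have hWW : W * star W = 1 := by
      rw [hW, hWstar, mul_assoc, ← mul_assoc V, hVV, one_mul, hUU']
    have hWW' : star W * W = 1 := by
      rw [hW, hWstar, mul_assoc, ← mul_assoc U, hUU, one_mul, hVV']
    have hXs : X = U * diagonal lam * star U := spectral_real hX.1
    have hYs : Y = V * diagonal mu * star V := spectral_real hY.1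
    have hLX : matLog X = U * diagonal (Real.log ∘ lam) * star U := matLog_of_posDef hX
    have hLY : matLog Y = V * diagonal (Real.log ∘ mu) * star V := matLog_of_posDef hY
    -- four traces
    have rowsum : ∀ i, ∑ j, (W i j) ^ 2 = 1 := by
      intro i
      have := congrFun (congrFun hWW i) i
      simp only [Matrix.mul_apply, Matrix.star_apply, star_trivial, Matrix.one_apply_eq] at this
      rw [← this]
      exact Finset.sum_congr rfl fun j _ => by ring
    have colsum : ∀ j, ∑ i, (W i j) ^ 2 = 1 := by
      intro j
      have := congrFun (congrFun hWW' j) j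
      simp only [Matrix.mul_apply, Matrix.star_apply, star_trivial, Matrix.one_apply_eq] at this
      rw [← this]
      exact Finset.sum_congr rfl fun i _ => by ring
    have tXY : (X * matLog Y).trace = ∑ i, ∑ j, lam i * Real.log (mu j) * (W i j) ^ 2 := by
      rw [hXs, hLY, trace_UDU, trace_DWDW]
      exact Finset.sum_congr rfl fun i _ => Finset.sum_congr rfl fun j _ => by
        simp [Function.comp, hW]
    have tYX : (Y * matLog X).trace = ∑ i, ∑ j, mu j * Real.log (lam i) * (W i j) ^ 2 := by
      rw [hYs, hLX, trace_UDU, trace_DWDW, ← hWstar, Finset.sum_comm]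
      exact Finset.sum_congr rfl fun i _ => Finset.sum_congr rfl fun j _ => by
        simp [Function.comp, Matrix.star_apply]
    have tXX : (X * matLog X).trace = ∑ i, ∑ j, lam i * Real.log (lam i) * (W i j) ^ 2 := by
      rw [hLX, hXs, trace_UDU, trace_DWDW, hUU']
      have : ∀ i, ∑ j, lam i * (Real.log ∘ lam) j * ((1 : Matrix n n ℝ) i j) ^ 2
          = lam i * Real.log (lam i) := by
        intro i
        rw [Finset.sum_eq_single i]
        · simp
        · intro j _ hj
          simp [Matrix.one_apply_ne' hj]
        · simp
      rw [Finset.sum_congr rfl fun i _ => this i]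
      exact Finset.sum_congr rfl fun i _ => by rw [← Finset.mul_sum, rowsum i, mul_one]
    have tYY : (Y * matLog Y).trace = ∑ i, ∑ j, mu j * Real.log (mu j) * (W i j) ^ 2 := by
      rw [hLY, hYs, trace_UDU, trace_DWDW, hVV']
      have : ∀ i, ∑ j, mu i * (Real.log ∘ mu) j * ((1 : Matrix n n ℝ) i j) ^ 2
          = mu i * Real.log (mu i) := by
        intro i
        rw [Finset.sum_eq_single i]
        · simp
        · intro j _ hj
          simp [Matrix.one_apply_ne' hj]
        · simp
      rw [Finset.sum_congr rfl fun i _ => this i, Finset.sum_comm]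
      exact Finset.sum_congr rfl fun i _ => by rw [← Finset.mul_sum, colsum i, mul_one]
    have hS : DvN X Y + DvN Y X
        = ∑ i, ∑ j, (W i j) ^ 2 * ((lam i - mu j) * (Real.log (lam i) - Real.log (mu j))) := by
      simp only [DvN, trace_add, trace_sub]
      rw [tXX, tYY, tXY, tYX]
      have hexp : ∑ i, ∑ j, (W i j) ^ 2 * ((lam i - mu j) * (Real.log (lam i) - Real.log (mu j)))
          = (∑ i, ∑ j, lam i * Real.log (lam i) * (W i j) ^ 2)
            + (∑ i, ∑ j, mu j * Real.log (mu j) * (W i j) ^ 2)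
            - (∑ i, ∑ j, lam i * Real.log (mu j) * (W i j) ^ 2)
            - (∑ i, ∑ j, mu j * Real.log (lam i) * (W i j) ^ 2) := by
        simp only [← Finset.sum_sub_distrib, ← Finset.sum_add_distrib]
        exact Finset.sum_congr rfl fun i _ => Finset.sum_congr rfl fun j _ => by ring
      rw [hexp]
      ring
    have hS0 : ∑ i, ∑ j,
        (W i j) ^ 2 * ((lam i - mu j) * (Real.log (lam i) - Real.log (mu j))) = 0 := by
      rw [← hS]
      simp only [JvN] at h
      linarith
    have hnn : ∀ i (j : n),
        0 ≤ (W i j) ^ 2 * ((lam i - mu j) * (Real.log (lam i) - Real.log (mu j))) :=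
      fun i j => mul_nonneg (sq_nonneg _)
        (log_prod_nonneg (hX.eigenvalues_pos i) (hY.eigenvalues_pos j))
    have hterm : ∀ i (j : n),
        (W i j) ^ 2 * ((lam i - mu j) * (Real.log (lam i) - Real.log (mu j))) = 0 := by
      intro i j
      have h1 := (Finset.sum_eq_zero_iff_of_nonneg
        (fun i _ => Finset.sum_nonneg fun j _ => hnn i j)).mp hS0 i (Finset.mem_univ i)
      exact (Finset.sum_eq_zero_iff_of_nonneg (fun j _ => hnn i j)).mp h1 j (Finset.mem_univ j)
    have key : ∀ i (j : n), W i j * (lam i - mu j) = 0 := by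
      intro i j
      rcases eq_or_ne (W i j) 0 with hw | hw
      · rw [hw, zero_mul]
      · have h2 : (lam i - mu j) * (Real.log (lam i) - Real.log (mu j)) = 0 := by
          have := hterm i j
          have hsq : (W i j) ^ 2 ≠ 0 := pow_ne_zero _ hw
          exact (mul_eq_zero.mp this).resolve_left hsq
        have heq : lam i = mu j :=
          eq_of_log_prod_eq_zero (hX.eigenvalues_pos i) (hY.eigenvalues_pos j) h2
        rw [heq, sub_self, mul_zero]
    have hmid : diagonal lam * W - W * diagonal mu = 0 := by
      ext i j
      simp only [Matrix.sub_apply, Matrix.diagonal_mul, Matrix.mul_diagonal, Matrix.zero_apply]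
      have := key i j
      nlinarith [key i j]
    have hdiff : X - Y = U * (diagonal lam * W - W * diagonal mu) * star V := by
      rw [mul_sub, sub_mul]
      congr 1
      · rw [hW]
        simp only [← mul_assoc]
        rw [mul_assoc (U * diagonal lam * star U) V (star V), hVV, mul_one, hXs]
      · rw [hW]
        simp only [← mul_assoc]
        rw [hYs]
        congr 1
        rw [show U * star U * V * diagonal mu = U * star U * (V * diagonal mu) by
          simp only [mul_assoc], hUU, one_mul]
    rw [hmid] at hdiff
    simp only [mul_zero, zero_mul] at hdiff
    exact sub_eq_zero.mp hdiff
  · rintro rfl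
    simp only [JvN, DvN, sub_self, zero_sub, neg_add_cancel, trace_zero]
    ring


lemma measurable_snocMap {d : ℕ} {g : (Fin d → ℝ) → ℝ} (hg : Measurable g) :
    Measurable (fun x : Fin d → ℝ => (Fin.snoc x (g x) : Fin (d + 1) → ℝ)) := by
  rw [measurable_pi_iff]
  intro i
  refine Fin.lastCases ?_ (fun k => ?_) i
  · simpa [Fin.snoc_last] using hg
  · simpa [Fin.snoc_castSucc] using measurable_pi_apply k

lemma jointCov_apply {d : ℕ} (P : Measure (Fin d → ℝ)) [IsProbabilityMeasure P]
    {g : (Fin d → ℝ) → ℝ} (hg : Measurable g) (i j : Fin (d + 1)) :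
    jointCov P g i j = ∫ x, ((Fin.snoc x (g x) : Fin (d + 1) → ℝ) i
        - ∫ y, (Fin.snoc y (g y) : Fin (d + 1) → ℝ) i ∂P) *
      ((Fin.snoc x (g x) : Fin (d + 1) → ℝ) j
        - ∫ y, (Fin.snoc y (g y) : Fin (d + 1) → ℝ) j ∂P) ∂P := by
  have hT := measurable_snocMap hg
  have hmean : ∀ k : Fin (d + 1),
      ∫ y, y k ∂(P.map (fun x => (Fin.snoc x (g x) : Fin (d + 1) → ℝ)))
        = ∫ y, (Fin.snoc y (g y) : Fin (d + 1) → ℝ) k ∂P :=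
    fun k => integral_map (μ := P) hT.aemeasurable (measurable_pi_apply k).aestronglyMeasurable
  simp only [jointCov, covMatrix, Matrix.of_apply]
  rw [hmean i, hmean j]
  exact integral_map hT.aemeasurable
    (((measurable_pi_apply i).sub measurable_const).mul
      ((measurable_pi_apply j).sub measurable_const)).aestronglyMeasurable

lemma jointCov_cc {d : ℕ} (P : Measure (Fin d → ℝ)) [IsProbabilityMeasure P]
    {g : (Fin d → ℝ) → ℝ} (hg : Measurable g) (i j : Fin d) :
    jointCov P g i.castSucc j.castSucc
      = ∫ x, (x i - ∫ y, y i ∂P) * (x j - ∫ y, y j ∂P) ∂P := by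
  rw [jointCov_apply P hg]
  simp only [Fin.snoc_castSucc]

lemma jointCov_cl {d : ℕ} (P : Measure (Fin d → ℝ)) [IsProbabilityMeasure P]
    {g : (Fin d → ℝ) → ℝ} (hg : Measurable g) (i : Fin d) :
    jointCov P g i.castSucc (Fin.last d)
      = ∫ x, (x i - ∫ y, y i ∂P) * (g x - ∫ y, g y ∂P) ∂P := by
  rw [jointCov_apply P hg]
  simp only [Fin.snoc_castSucc, Fin.snoc_last]

lemma jointCov_lc {d : ℕ} (P : Measure (Fin d → ℝ)) [IsProbabilityMeasure P]
    {g : (Fin d → ℝ) → ℝ} (hg : Measurable g) (i : Fin d) :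
    jointCov P g (Fin.last d) i.castSucc
      = ∫ x, (x i - ∫ y, y i ∂P) * (g x - ∫ y, g y ∂P) ∂P := by
  rw [jointCov_apply P hg]
  simp only [Fin.snoc_castSucc, Fin.snoc_last]
  have : (fun x : Fin d → ℝ => (g x - ∫ y, g y ∂P) * (x i - ∫ y, y i ∂P))
      = fun x => (x i - ∫ y, y i ∂P) * (g x - ∫ y, g y ∂P) := by
    funext x; ring
  rw [this]

lemma jointCov_ll {d : ℕ} (P : Measure (Fin d → ℝ)) [IsProbabilityMeasure P]
    {g : (Fin d → ℝ) → ℝ} (hg : Measurable g) :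
    jointCov P g (Fin.last d) (Fin.last d) = ∫ x, (g x - ∫ y, g y ∂P) ^ 2 ∂P := by
  rw [jointCov_apply P hg]
  simp only [Fin.snoc_last]
  have : (fun x : Fin d → ℝ => (g x - ∫ y, g y ∂P) * (g x - ∫ y, g y ∂P))
      = fun x => (g x - ∫ y, g y ∂P) ^ 2 := by
    funext x; ring
  rw [this]

end Aux

/-- Interpretation of the `J_vN` loss as matching second-order statistics:
`J_vN(σ^P_{x,f(x)} : σ^P_{x,f̂(x)}) = 0` iff `Var(f(x)) = Var(f̂(x))` and
`Cov(xᵢ, f(x)) = Cov(xᵢ, f̂(x))` for every coordinate `i`. -/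
theorem JvN_jointCov_eq_zero_iff {d : ℕ}
    (P : Measure (Fin d → ℝ)) [IsProbabilityMeasure P]
    (hm : ∀ i, MemLp (fun x => x i) 2 P)
    (f fhat : (Fin d → ℝ) → ℝ) (hf : Measurable f) (hfhat : Measurable fhat)
    (hf2 : MemLp f 2 P) (hfhat2 : MemLp fhat 2 P)
    (hpd : (jointCov P f).PosDef) (hpd' : (jointCov P fhat).PosDef) :
    JvN (jointCov P f) (jointCov P fhat) = 0 ↔
      (∫ x, (f x - ∫ y, f y ∂P) ^ 2 ∂P = ∫ x, (fhat x - ∫ y, fhat y ∂P) ^ 2 ∂P) ∧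
      ∀ i, ∫ x, (x i - ∫ y, y i ∂P) * (f x - ∫ y, f y ∂P) ∂P =
        ∫ x, (x i - ∫ y, y i ∂P) * (fhat x - ∫ y, fhat y ∂P) ∂P := by
  rw [JvN_eq_zero_iff_of_posDef hpd hpd']
  constructor
  · intro h
    constructor
    · have := congrFun (congrFun h (Fin.last d)) (Fin.last d)
      rwa [jointCov_ll P hf, jointCov_ll P hfhat] at this
    · intro i
      have := congrFun (congrFun h i.castSucc) (Fin.last d)
      rwa [jointCov_cl P hf i, jointCov_cl P hfhat i] at this
  · rintro ⟨h1, h2⟩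
    ext i j
    refine Fin.lastCases ?_ (fun i0 => ?_) i
    · refine Fin.lastCases ?_ (fun j0 => ?_) j
      · rw [jointCov_ll P hf, jointCov_ll P hfhat, h1]
      · rw [jointCov_lc P hf j0, jointCov_lc P hfhat j0, h2 j0]
    · refine Fin.lastCases ?_ (fun j0 => ?_) j
      · rw [jointCov_cl P hf i0, jointCov_cl P hfhat i0, h2 i0]
      · rw [jointCov_cc P hf i0 j0, jointCov_cc P hfhat i0 j0]
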